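/- In the coin-toss model, Bob's integrated Bayes risk under the randomised response mechanism q^(ω) satisfies R_B(q^(ω)) = 1/4 + (1/2)·min(ω, 1−ω) for every ω ∈ [0,1]. -/
import Mathlib


open scoped BigOperators

namespace CoinToss

/-- The parameter θ ∈ {0, 1/2}, encoded by a Bool: `false ↦ 0`, `true ↦ 1/2`. -/
noncomputable def thetaVal (t : Bool) : ℝ := if t then 1/2 else 0

/-- Joint pmf of (θ, X): prior P(θ=0)=P(θ=1/2)=1/2 and X | θ ~ Bern(θ). -/
noncomputable def coinJoint (t x : Bool) : ℝ :=
  if t then 1/4 else (if x then 0 else 1/2)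

/-- Bob's 0-1 loss L_B(θ, δ) = 1{δ ≠ θ}. -/
noncomputable def LB (θ δ : ℝ) : ℝ := if δ = θ then 0 else 1

/-- Eve's loss: 0 if δ = x, 1 if (δ,x)=(1,0), 10 if (δ,x)=(0,1). -/
noncomputable def LE (x δ : Bool) : ℝ := if δ = x then 0 else if δ then 1 else 10

variable {H : Type*} [Fintype H]

/-- A release mechanism: Markov kernel from the data space {0,1} to a finite release space. -/
def IsMechanism (q : Bool → H → ℝ) : Prop :=
  (∀ x h, 0 ≤ q x h) ∧ ∀ x, ∑ h, q x h = 1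

/-- Probability of the release value `h` under the joint law of (θ, X, η). -/
noncomputable def relP (q : Bool → H → ℝ) (h : H) : ℝ :=
  ∑ t, ∑ x, coinJoint t x * q x h

/-- Bob's posterior expected loss of decision `d` given release value `h`. -/
noncomputable def postLossB (q : Bool → H → ℝ) (h : H) (d : ℝ) : ℝ :=
  (∑ t, ∑ x, coinJoint t x * q x h * LB (thetaVal t) d) / relP q h

/-- Eve's posterior expected loss of decision `d` given release value `h`. -/
noncomputable def postLossE (q : Bool → H → ℝ) (h : H) (d : Bool) : ℝ :=
  (∑ t, ∑ x, coinJoint t x * q x h * LE x d) / relP q h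

/-- Bayes optimality for Bob: at every release value of positive probability, the rule takes
values in the decision space {0, 1/2} and minimizes the posterior expected loss there. -/
def IsBayesB (q : Bool → H → ℝ) (dB : H → ℝ) : Prop :=
  ∀ h, 0 < relP q h →
    dB h ∈ ({0, 1/2} : Set ℝ) ∧
    ∀ d ∈ ({0, 1/2} : Set ℝ), postLossB q h (dB h) ≤ postLossB q h d

/-- Bayes optimality for Eve. -/
def IsBayesE (q : Bool → H → ℝ) (dE : H → Bool) : Prop :=
  ∀ h, 0 < relP q h → ∀ d : Bool, postLossE q h (dE h) ≤ postLossE q h d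

/-- Bob's integrated risk R_B(q) = E[L_B(θ, δ_B(η))]. -/
noncomputable def RB (q : Bool → H → ℝ) (dB : H → ℝ) : ℝ :=
  ∑ t, ∑ x, ∑ h, coinJoint t x * q x h * LB (thetaVal t) (dB h)

/-- Eve's integrated risk R_E(q) = E[L_E(X, δ_E(η))]. -/
noncomputable def RE (q : Bool → H → ℝ) (dE : H → Bool) : ℝ :=
  ∑ t, ∑ x, ∑ h, coinJoint t x * q x h * LE x (dE h)

end CoinToss

open CoinToss

namespace CoinToss
/-- The randomised response mechanism q^(ω): release η = X with probability 1-ω and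
η = 1-X with probability ω (release values encoded by Bool, `true ↦ 1`, `false ↦ 0`). -/
noncomputable def qrr (ω : ℝ) : Bool → Bool → ℝ := fun x h => if h = x then 1 - ω else ω
end CoinToss

/-- In the coin-toss model, Bob's integrated Bayes risk under randomised response q^(ω)
satisfies R_B(q^(ω)) = 1/4 + (1/2)·min(ω, 1-ω) for every ω ∈ [0,1]. -/
theorem coin_toss_rr_bob_risk (ω : ℝ) (hω : ω ∈ Set.Icc (0:ℝ) 1)
    (dB : Bool → ℝ) (hdB : IsBayesB (qrr ω) dB) :
    RB (qrr ω) dB = 1/4 + (1/2) * min ω (1 - ω) := by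
  obtain ⟨hω0, hω1⟩ := hω
  have hpf : 0 < relP (qrr ω) false := by
    simp [relP, coinJoint, qrr, Fintype.sum_bool]; linarith
  have hpt : 0 < relP (qrr ω) true := by
    simp [relP, coinJoint, qrr, Fintype.sum_bool]; linarith
  obtain ⟨hmf, hif⟩ := hdB false hpf
  obtain ⟨hmt, hit⟩ := hdB true hpt
  have hmem0 : (0:ℝ) ∈ ({0, 1/2} : Set ℝ) := by norm_num
  have hmemh : (1/2:ℝ) ∈ ({0, 1/2} : Set ℝ) := by norm_num
  have key : ∀ (h : Bool) (d d' : ℝ), 0 < relP (qrr ω) h →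
      postLossB (qrr ω) h d ≤ postLossB (qrr ω) h d' →
      (∑ t, ∑ x, coinJoint t x * qrr ω x h * LB (thetaVal t) d) ≤
      (∑ t, ∑ x, coinJoint t x * qrr ω x h * LB (thetaVal t) d') := by
    intro h d d' hr hle
    exact (div_le_div_iff_of_pos_right hr).mp hle
  simp only [Set.mem_insert_iff, Set.mem_singleton_iff] at hmf hmt
  rcases hmf with hf | hf <;> rcases hmt with ht | ht <;>
  · have c1 := key false (dB false) (if dB false = 0 then 1/2 else 0) hpf
      (hif _ (by split <;> norm_num))
    have c2 := key true (dB true) (if dB true = 0 then 1/2 else 0) hpt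
      (hit _ (by split <;> norm_num))
    rw [hf] at c1
    rw [ht] at c2
    norm_num [coinJoint, qrr, thetaVal, LB, Fintype.sum_bool] at c1 c2
    rcases le_total ω (1 - ω) with hm | hm <;>
      [rw [min_eq_left hm]; rw [min_eq_right hm]] <;>
      simp [RB, coinJoint, qrr, thetaVal, LB, Fintype.sum_bool, hf, ht] <;>
      linarith
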